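/- Let n ≥ 1, m ≥ 1, N ≥ 1 be natural numbers and D a real number with 1 ≤ D ≤ 3, and set a := D(m−1)/(2Nm) (so that 2aN = D(m−1)/m), α_{n,m,D} := 2m/(2m(n+1) − D), α_{N+n,1,D} := 2/(2(N+n+1) − D), α_{n,1,D} := 2/(2(n+1) − D). Provided α_{N+n,1,D} − a·α_{n,m,D} ≠ 0, the following exponent identity holds: (4−D) α_{n,m,D} (1−a) α_{N+n,1,D} / ( α_{N+n,1,D} − a α_{n,m,D} ) = (4−D) α_{n,1,D}. -/
import Mathlib


/-- The exponent identity lifting the D-dimensional bound from `m = 1` to general `m`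
via Gagliardo–Nirenberg interpolation with parameter `a = D(m−1)/(2Nm)`:
`(4−D) α_{n,m,D} (1−a) α_{N+n,1,D} / (α_{N+n,1,D} − a α_{n,m,D}) = (4−D) α_{n,1,D}`. -/
theorem exponent_identity_GN_lift
    (n m N : ℕ) (hn : 1 ≤ n) (hm : 1 ≤ m) (hN : 1 ≤ N)
    (D : ℝ) (hD1 : 1 ≤ D) (hD3 : D ≤ 3)
    (a αnm αNn1 αn1 : ℝ)
    (ha : a = D * ((m : ℝ) - 1) / (2 * (N : ℝ) * (m : ℝ)))
    (hαnm : αnm = 2 * (m : ℝ) / (2 * (m : ℝ) * ((n : ℝ) + 1) - D))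
    (hαNn1 : αNn1 = 2 / (2 * ((N : ℝ) + (n : ℝ) + 1) - D))
    (hαn1 : αn1 = 2 / (2 * ((n : ℝ) + 1) - D))
    (hden : αNn1 - a * αnm ≠ 0) :
    (4 - D) * αnm * (1 - a) * αNn1 / (αNn1 - a * αnm) = (4 - D) * αn1 := by
  have hm1 : (1:ℝ) ≤ (m:ℝ) := by exact_mod_cast hm
  have hn1 : (1:ℝ) ≤ (n:ℝ) := by exact_mod_cast hn
  have hN1 : (1:ℝ) ≤ (N:ℝ) := by exact_mod_cast hN
  have h1 : 2 * (m : ℝ) * ((n : ℝ) + 1) - D ≠ 0 := by nlinarith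
  have h2 : 2 * ((N : ℝ) + (n : ℝ) + 1) - D ≠ 0 := by nlinarith
  have h3 : 2 * ((n : ℝ) + 1) - D ≠ 0 := by nlinarith
  have h4 : 2 * (N : ℝ) * (m : ℝ) ≠ 0 := by positivity
  rw [div_eq_iff hden]
  subst ha hαnm hαNn1 hαn1
  field_simp
  ring
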